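/- Let H be a Hilbert space with orthogonal projections (P_j)_{j∈ℤ} forming a resolution of identity (P_jP_k = δ_{jk}P_j, ∑_j P_j = I strongly). Let A, B be bounded operators on H such that A P_j = P_{j+m} A for all j (A raises frequency by m ≠ 0), B commutes with every P_j, and B P_j has operator norm ≤ ε_j with ε_j → 0 as |j| → ∞. If u ∈ H satisfies u = A B u, then u = 0. -/

import Mathlib

open Filter

theorem abstract_no_resonance {H : Type*} [NormedAddCommGroup H]
    [InnerProductSpace ℂ H] [CompleteSpace H]
    (P : ℤ → H →L[ℂ] H)
    (horth : ∀ j k : ℤ, j ≠ k → (P j).comp (P k) = 0)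
    (hidem : ∀ j : ℤ, (P j).comp (P j) = P j)
    (hsa : ∀ (j : ℤ) (u v : H), (inner ℂ (P j u) v : ℂ) = inner ℂ u (P j v))
    (hres : ∀ u : H, HasSum (fun j : ℤ => P j u) u)
    (m : ℤ) (hm : m ≠ 0) (A B : H →L[ℂ] H)
    (hA : ∀ j : ℤ, A.comp (P j) = (P (j + m)).comp A)
    (hB : ∀ j : ℤ, B.comp (P j) = (P j).comp B)
    (ε : ℤ → ℝ) (hε : ∀ j : ℤ, ‖B.comp (P j)‖ ≤ ε j)
    (hε0 : Tendsto ε cofinite (nhds 0))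
    (u : H) (hu : u = A (B u)) : u = 0 := by
  have hε_nonneg : ∀ j, 0 ≤ ε j := fun j => le_trans (norm_nonneg _) (hε j)
  set a : ℤ → ℝ := fun j => ‖P j u‖ with ha_def
  have ha_nonneg : ∀ j, 0 ≤ a j := fun j => norm_nonneg _
  -- key recursion
  have step : ∀ j : ℤ, a (j + m) ≤ ‖A‖ * (ε j * a j) := by
    intro j
    have e1 : P (j + m) (A (B u)) = A (P j (B u)) := by
      have := congrArg (fun T : H →L[ℂ] H => T (B u)) (hA j)
      simpa using this.symm
    have e2 : P j (B u) = B (P j u) := by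
      have := congrArg (fun T : H →L[ℂ] H => T u) (hB j)
      simpa using this.symm
    have e4 : P j (P j u) = P j u := by
      have := congrArg (fun T : H →L[ℂ] H => T u) (hidem j)
      simpa using this
    have h1 : P (j + m) u = A (B (P j u)) := by
      conv_lhs => rw [hu]
      rw [e1, e2]
    have e3 : (B.comp (P j)) (P j u) = B (P j u) := by
      rw [ContinuousLinearMap.comp_apply, e4]
    calc a (j + m) = ‖A (B (P j u))‖ := by simp only [ha_def]; rw [h1]
      _ ≤ ‖A‖ * ‖B (P j u)‖ := A.le_opNorm _
      _ = ‖A‖ * ‖(B.comp (P j)) (P j u)‖ := by rw [e3]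
      _ ≤ ‖A‖ * (ε j * a j) :=
          mul_le_mul_of_nonneg_left ((B.comp (P j)).le_of_opNorm_le (hε j) (P j u))
            (norm_nonneg A)
  -- a → 0 along cofinite
  have ha0 : Tendsto a cofinite (nhds 0) := by
    have := (hres u).summable.tendsto_cofinite_zero
    rw [tendsto_zero_iff_norm_tendsto_zero] at this
    exact this
  -- eventually monotone
  have hmono : ∀ᶠ j in (cofinite : Filter ℤ), a (j + m) ≤ a j := by
    have hδ : (0:ℝ) < (‖A‖ + 1)⁻¹ := by positivity
    have hev : ∀ᶠ j in (cofinite : Filter ℤ), ε j < (‖A‖ + 1)⁻¹ :=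
      hε0.eventually (eventually_lt_nhds hδ)
    filter_upwards [hev] with j hj
    have h1 : ‖A‖ * ε j ≤ 1 := by
      have hA1 : (0:ℝ) < ‖A‖ + 1 := by positivity
      have h2 : ‖A‖ * ε j ≤ ‖A‖ * (‖A‖ + 1)⁻¹ :=
        mul_le_mul_of_nonneg_left hj.le (norm_nonneg A)
      have h3 : ‖A‖ * (‖A‖ + 1)⁻¹ ≤ 1 := by
        have hc : (‖A‖ + 1) * (‖A‖ + 1)⁻¹ = 1 := mul_inv_cancel₀ (ne_of_gt hA1)
        nlinarith [inv_nonneg.mpr hA1.le]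
      linarith
    calc a (j + m) ≤ ‖A‖ * (ε j * a j) := step j
      _ = (‖A‖ * ε j) * a j := by ring
      _ ≤ 1 * a j := mul_le_mul_of_nonneg_right h1 (ha_nonneg j)
      _ = a j := one_mul _
  -- zero propagation forward
  have zprop : ∀ n : ℕ, ∀ j : ℤ, a j = 0 → a (j + n * m) = 0 := by
    intro n
    induction n with
    | zero => intro j h; simpa using h
    | succ n ih =>
      intro j h
      have h1 : a ((j + n * m) + m) ≤ ‖A‖ * (ε (j + n * m) * a (j + n * m)) :=
        step (j + n * m)
      rw [ih j h] at h1
      have h2 : a ((j + n * m) + m) ≤ 0 := by simpa using h1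
      have h3 : (j + (n : ℤ) * m) + m = j + ((n : ℕ) + 1 : ℕ) * m := by push_cast; ring
      rw [h3] at h2
      exact le_antisymm h2 (ha_nonneg _)
  -- main claim: a j = 0 for all j
  have hzero : ∀ j : ℤ, a j = 0 := by
    intro j
    -- the bad set is finite along the progression k ↦ j - (k+1)*m
    have hinj : Function.Injective (fun k : ℕ => j - ((k : ℤ) + 1) * m) := by
      intro x y hxy
      simp only at hxy
      have : ((x : ℤ) + 1) * m = ((y : ℤ) + 1) * m := by linarith [hxy]
      have := mul_right_cancel₀ hm this
      exact_mod_cast by linarith [this]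
    rw [eventually_cofinite] at hmono
    have hfin : {k : ℕ | ¬ a (j - ((k : ℤ) + 1) * m + m) ≤ a (j - ((k : ℤ) + 1) * m)}.Finite := by
      have := hmono.preimage (Function.Injective.injOn hinj)
      simpa using this
    obtain ⟨N, hN⟩ := hfin.bddAbove
    have hgood : ∀ k : ℕ, N < k → a (j - (k : ℤ) * m) ≤ a (j - ((k : ℤ) + 1) * m) := by
      intro k hk
      have hk' : k ∉ {k : ℕ | ¬ a (j - ((k : ℤ) + 1) * m + m) ≤ a (j - ((k : ℤ) + 1) * m)} := by
        intro hmem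
        exact absurd (hN hmem) (not_le.mpr hk)
      have := not_not.mp (fun h => hk' h)
      have heq : j - ((k : ℤ) + 1) * m + m = j - (k : ℤ) * m := by ring
      rwa [heq] at this
    -- chain: a (j - (N+1)*m) ≤ a (j - (N+1+d)*m) for all d
    have hchain : ∀ d : ℕ, a (j - ((N : ℤ) + 1) * m) ≤ a (j - ((N : ℤ) + 1 + d) * m) := by
      intro d
      induction d with
      | zero => simp
      | succ d ih =>
        refine le_trans ih ?_
        have := hgood (N + 1 + d) (by omega)
        have e1 : ((N + 1 + d : ℕ) : ℤ) = (N : ℤ) + 1 + d := by push_cast; ring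
        have e2 : (N : ℤ) + 1 + d + 1 = (N : ℤ) + 1 + (d + 1 : ℕ) := by push_cast; ring
        rw [e1] at this
        calc a (j - ((N:ℤ) + 1 + d) * m) ≤ a (j - ((N:ℤ) + 1 + d + 1) * m) := this
          _ = a (j - ((N:ℤ) + 1 + ((d:ℕ) + 1 : ℕ)) * m) := by rw [e2]
    -- the tail tends to 0
    have htail : Tendsto (fun d : ℕ => a (j - ((N : ℤ) + 1 + d) * m)) atTop (nhds 0) := by
      have hinj2 : Function.Injective (fun d : ℕ => j - ((N : ℤ) + 1 + d) * m) := by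
        intro x y hxy
        simp only at hxy
        have : ((N:ℤ) + 1 + x) * m = ((N:ℤ) + 1 + y) * m := by linarith [hxy]
        have := mul_right_cancel₀ hm this
        exact_mod_cast by linarith [this]
      have h1 : Tendsto (fun d : ℕ => j - ((N : ℤ) + 1 + d) * m) cofinite cofinite :=
        hinj2.tendsto_cofinite
      rw [Nat.cofinite_eq_atTop] at h1
      exact ha0.comp h1
    have hle0 : a (j - ((N : ℤ) + 1) * m) ≤ 0 :=
      ge_of_tendsto htail (Eventually.of_forall hchain)
    have hz : a (j - ((N : ℤ) + 1) * m) = 0 := le_antisymm hle0 (ha_nonneg _)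
    have := zprop (N + 1) (j - ((N : ℤ) + 1) * m) hz
    have e3 : j - ((N : ℤ) + 1) * m + ((N + 1 : ℕ) : ℤ) * m = j := by push_cast; ring
    rwa [e3] at this
  -- conclude u = 0
  have hPzero : ∀ j : ℤ, P j u = 0 := fun j => norm_eq_zero.mp (hzero j)
  have h0 : HasSum (fun j : ℤ => P j u) 0 := by
    have : (fun j : ℤ => P j u) = fun _ => 0 := funext hPzero
    rw [this]; exact hasSum_zero
  exact ((hres u).unique h0)
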